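/- Let k ≥ 3, q ≥ 1, π ∈ 𝕊_{k−1}, and let C = {a₁,…,a_t} with t ≥ 2 be a good set for π. Then the number of vertices x ∈ W^π_{k,q} that receive the color 0 under the distance coloring determined by C equals Σ_{d=0}^{q−|S(π)|−1} X^t_d · C(k+q−|S(π)|−t−2−d, k−t−1), where X^t_m denotes the number of t-tuples (d₁,…,d_t) of nonnegative integers with d₁+⋯+d_t = m in which at least two coordinates are equal to the maximal coordinate. -/

import Mathlib

open Finset

attribute [local instance] Classical.propDecidable

noncomputable section

/-- `π` is a permutation of `{1,…,k-1}` given in one-line notation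
(`π p` is the entry at position `p`), normalized to `0` outside `[1,k-1]`. -/
def OneLine (k : ℕ) (π : ℕ → ℕ) : Prop :=
  Set.BijOn π (Set.Icc 1 (k - 1)) (Set.Icc 1 (k - 1)) ∧
    ∀ p, p ∉ Set.Icc 1 (k - 1) → π p = 0

/-- The set `S(π)` of adjacent inversions of `π`:
those `i ∈ [1,k-2]` such that `i+1` appears before `i` in `π`. -/
def adjInvF (k : ℕ) (π : ℕ → ℕ) : Finset ℕ :=
  (Finset.Icc 1 (k - 2)).filter fun i =>
    ∃ p ∈ Finset.Icc 1 (k - 1), ∃ r ∈ Finset.Icc 1 (k - 1),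
      p < r ∧ π p = i + 1 ∧ π r = i

/-- `W^π_{k,q}`: weakly increasing `(k-1)`-tuples with entries in `[0,q-1]`
that are strictly increasing at every adjacent inversion of `π`
(vectors are functions `ℕ → ℕ` supported on `[1,k-1]`). -/
def W (k q : ℕ) (π : ℕ → ℕ) : Set (ℕ → ℕ) :=
  {v | (∀ i, i ∉ Finset.Icc 1 (k - 1) → v i = 0) ∧
       (∀ i ∈ Finset.Icc 1 (k - 1), v i ≤ q - 1) ∧
       (∀ i, 1 ≤ i → i + 1 ≤ k - 1 → v i ≤ v (i + 1)) ∧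
       (∀ i ∈ adjInvF k π, v i < v (i + 1))}

/-- `x + e_{π_a} + e_{π_{a+1}} + ⋯ + e_{π_{b-1}}`. -/
def shift (π : ℕ → ℕ) (a b : ℕ) (x : ℕ → ℕ) : ℕ → ℕ :=
  fun i => x i + if i ∈ (Finset.Icc a (b - 1)).image π then 1 else 0

/-- Adjacency in the graph `G^π_{k,q}`: one vertex is obtained from the other
by adding `e_{π_a} + ⋯ + e_{π_{b-1}}` for some `1 ≤ a < b ≤ k`. -/
def AdjRel (k : ℕ) (π : ℕ → ℕ) (x y : ℕ → ℕ) : Prop :=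
  ∃ a b, 1 ≤ a ∧ a < b ∧ b ≤ k ∧ (y = shift π a b x ∨ x = shift π a b y)

/-- The number of maximal blocks of consecutive integers of a finite set `T ⊆ ℕ`. -/
def numBlocks (T : Finset ℕ) : ℕ := (T.filter fun t => t + 1 ∉ T).card

/-- `cs_i(π)`: the number of pairs `1 ≤ a < b ≤ k` such that
`T_{a,b} = {π_a,…,π_{b-1}}` decomposes into exactly `i` maximal blocks
of consecutive integers. -/
def cs (k : ℕ) (π : ℕ → ℕ) (i : ℕ) : ℕ :=
  ((Finset.Icc 1 k ×ˢ Finset.Icc 1 k).filter fun p =>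
    p.1 < p.2 ∧ numBlocks ((Finset.Icc p.1 (p.2 - 1)).image π) = i).card

/-- For `i < j`, `{i,j}` is an edge of `G_π` iff `{i,i+1,…,j-1}` occurs as
a set of consecutive entries of `π`. -/
def GpiEdge (k : ℕ) (π : ℕ → ℕ) (i j : ℕ) : Prop :=
  ∃ a, 1 ≤ a ∧ a + (j - i) ≤ k ∧
    (Finset.Icc a (a + (j - i) - 1)).image π = Finset.Icc i (j - 1)

/-- Unordered adjacency in `G_π`. -/
def GpiAdjU (k : ℕ) (π : ℕ → ℕ) (i j : ℕ) : Prop :=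
  (i < j ∧ GpiEdge k π i j) ∨ (j < i ∧ GpiEdge k π j i)

/-- The position of the value `v` in the one-line notation of `π`. -/
def posOf (k : ℕ) (π : ℕ → ℕ) (v : ℕ) : ℕ :=
  if h : ((Finset.Icc 1 (k - 1)).filter fun t => π t = v).Nonempty then
    ((Finset.Icc 1 (k - 1)).filter fun t => π t = v).min' h
  else 0

/-- The rotation `r` on one-line permutations: if `π = π₁…π_{t-1}(k-1)π_{t+1}…π_{k-1}`,
then `r(π) = (π_{t+1}+1)…(π_{k-1}+1) 1 (π₁+1)…(π_{t-1}+1)`. -/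
def rot (k : ℕ) (π : ℕ → ℕ) : ℕ → ℕ := fun p =>
  if p ∉ Finset.Icc 1 (k - 1) then 0
  else if p < k - posOf k π (k - 1) then π (posOf k π (k - 1) + p) + 1
  else if p = k - posOf k π (k - 1) then 1
  else π (p - (k - posOf k π (k - 1))) + 1

/-- The reflection `s` on one-line permutations: if `π = π₁…π_{i-1} 1 π_{i+1}…π_{k-1}`,
then `s(π) = (k+1-π_{i-1})…(k+1-π₁) 1 (k+1-π_{k-1})…(k+1-π_{i+1})`. -/
def srefl (k : ℕ) (π : ℕ → ℕ) : ℕ → ℕ := fun p =>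
  if p ∉ Finset.Icc 1 (k - 1) then 0
  else if p < posOf k π 1 then k + 1 - π (posOf k π 1 - p)
  else if p = posOf k π 1 then 1
  else k + 1 - π (k + posOf k π 1 - p)

/-- The rotation `ρ` of the vertex set `{1,…,k}`. -/
def rotV (k i : ℕ) : ℕ := if i < k then i + 1 else 1

/-- The reflection `σ` of the vertex set `{1,…,k}`. -/
def sreflV (k i : ℕ) : ℕ := if i = 1 then 1 else k + 2 - i

/-- The maximal sorted family `(S₁,…,S_k)` associated with `σ`, `0`-indexed:
`sortedFam k σ (i-1) = S_i`. -/
def sortedFam (k : ℕ) (σ : ℕ → ℕ) : ℕ → Finset ℕ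
  | 0 => insert 1 ((adjInvF k σ).image (· + 1))
  | j + 1 => insert (σ (j + 1) + 1) ((sortedFam k σ j).erase (σ (j + 1)))

/-- `ear(π)`. -/
def ear (k : ℕ) (π : ℕ → ℕ) : ℕ :=
  ((Finset.Icc 1 (k - 2)).filter fun i => π (i + 1) = π i + 1 ∨ π i = π (i + 1) + 1).card
    + (({1, k - 1} : Finset ℕ) ∩ ({π 1, π (k - 1)} : Finset ℕ)).card

/-- `ε_i(π) = 1` if `i-1 ∈ S(π)` and `0` otherwise. -/
def eps (k : ℕ) (π : ℕ → ℕ) (i : ℕ) : ℕ := if i - 1 ∈ adjInvF k π then 1 else 0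

/-- Extension of a vector with the conventions `x_k = q-1` (`x₀ = 0` holds by
the normalization of vectors in `W^π_{k,q}`). -/
def xext (k q : ℕ) (x : ℕ → ℕ) (i : ℕ) : ℕ := if i = k then q - 1 else x i

/-- The label list `L^π(x) = {i ∈ [1,k] : x_{i-1} < x_i - ε_i(π)}`. -/
def labels (k q : ℕ) (π : ℕ → ℕ) (x : ℕ → ℕ) : Finset ℕ :=
  (Finset.Icc 1 k).filter fun i => xext k q x (i - 1) + eps k π i < xext k q x i

/-- A Sperner labeling of `G^π_{k,q}`. -/
def IsSperner (k q : ℕ) (π : ℕ → ℕ) (f : (ℕ → ℕ) → ℕ) : Prop :=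
  (∀ x ∈ W k q π, f x = 0 ∨ f x ∈ labels k q π x) ∧
  (∀ x ∈ W k q π, ∀ y ∈ W k q π, AdjRel k π x y → f x = f y ∨ f x = 0 ∨ f y = 0)

/-- The entry `w` appears between the entries `u` and `v` in `π`. -/
def Between (k : ℕ) (π : ℕ → ℕ) (u v w : ℕ) : Prop :=
  (posOf k π u < posOf k π w ∧ posOf k π w < posOf k π v) ∨
  (posOf k π v < posOf k π w ∧ posOf k π w < posOf k π u)

/-- A good set of colors for `π`. -/
def GoodSet (k : ℕ) (π : ℕ → ℕ) (C : Finset ℕ) : Prop :=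
  C ⊆ Finset.Icc 1 k ∧
  (∀ i ∈ C, ∀ j ∈ C, i ≠ j → ¬ GpiAdjU k π i j) ∧
  (∀ a ∈ C, ∀ b ∈ C, 1 < a → a < b → b < k →
      ((Between k π (a - 1) b a ∨ Between k π (a - 1) b (b - 1)) ∧
       (Between k π (b - 1) a (a - 1) ∨ Between k π (b - 1) a b))) ∧
  (1 ∈ C → ∀ b ∈ C, b ≠ 1 → Between k π 1 (b - 1) b) ∧
  (k ∈ C → ∀ b ∈ C, b ≠ k → Between k π b (k - 1) (b - 1))

/-- `x_a - x_{a-1} - ε_a(π)`, the `a`-th coordinate of the distance map `D`. -/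
def dval (k q : ℕ) (π : ℕ → ℕ) (x : ℕ → ℕ) (a : ℕ) : ℕ :=
  xext k q x a - xext k q x (a - 1) - eps k π a

/-- The distance coloring determined by a set of colors `C`:
`x` gets color `a ∈ C` if `dval x a` is the unique maximum of `dval x` on `C`,
and `0` otherwise. -/
def dcol (k q : ℕ) (π : ℕ → ℕ) (C : Finset ℕ) (x : ℕ → ℕ) : ℕ :=
  if h : ∃ a ∈ C, ∀ b ∈ C, b ≠ a → dval k q π x b < dval k q π x a then h.choose else 0

/-- `X^t_m`: the number of `t`-tuples of nonnegative integers summing to `m`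
having at least two coordinates equal to the maximal coordinate. -/
def Xcount (t m : ℕ) : ℕ :=
  ((Finset.Nat.antidiagonalTuple t m).filter fun d =>
    ∃ i j : Fin t, i ≠ j ∧ (∀ l, d l ≤ d i) ∧ d j = d i).card


/-! ### Auxiliary lemmas -/

lemma adt_succ' (k n : ℕ) :
    Finset.Nat.antidiagonalTuple (k+1) n =
      (Finset.HasAntidiagonal.antidiagonal n).biUnion fun ab =>
        (Finset.Nat.antidiagonalTuple k ab.2).image
          (fun y : Fin k → ℕ => Fin.cons ab.1 y) := by
  ext x
  simp only [Finset.Nat.mem_antidiagonalTuple, mem_biUnion, Finset.HasAntidiagonal.mem_antidiagonal,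
    mem_image, Prod.exists]
  constructor
  · intro h
    exact ⟨x 0, ∑ i : Fin k, x i.succ, (Fin.sum_univ_succ x).symm.trans h, Fin.tail x, rfl,
      Fin.cons_self_tail x⟩
  · rintro ⟨a, b, hab, y, hy, rfl⟩
    rw [Fin.sum_univ_succ]
    simp [Fin.cons_succ, hy, hab]

lemma card_adt (j r : ℕ) :
    (Finset.Nat.antidiagonalTuple (j+1) r).card = (r + j).choose j := by
  induction j generalizing r with
  | zero => simp
  | succ j ih =>
    rw [adt_succ', card_biUnion]
    · have h1 : ∀ ab ∈ Finset.HasAntidiagonal.antidiagonal r,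
          ((Finset.Nat.antidiagonalTuple (j+1) ab.2).image
            (fun y : Fin (j+1) → ℕ => (Fin.cons ab.1 y : Fin (j+2) → ℕ))).card
            = (ab.2 + j).choose j := by
        intro ab _
        rw [Finset.card_image_of_injective _ (Fin.cons_right_injective _), ih]
      rw [sum_congr rfl h1, Nat.sum_antidiagonal_eq_sum_range_succ_mk]
      have h2 : ∑ i ∈ range (r+1), ((r - i) + j).choose j
          = ∑ i ∈ range (r+1), (i + j).choose j := by
        rw [← Finset.sum_range_reflect]
        refine sum_congr rfl fun i hi => ?_
        simp only [mem_range] at hi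
        congr 1
        omega
      rw [show r.succ = r + 1 from rfl, h2]
      have h3 : ∑ i ∈ range (r+1), (i + j).choose j = ∑ m ∈ Icc j (r + j), m.choose j := by
        rw [show Icc j (r+j) = Finset.map (addLeftEmbedding j) (range (r+1)) from ?_]
        · rw [Finset.sum_map]
          refine sum_congr rfl fun i _ => ?_
          simp [addLeftEmbedding, Nat.add_comm]
        · ext m
          simp only [mem_Icc, mem_map, mem_range, addLeftEmbedding_apply]
          constructor
          · intro h; exact ⟨m - j, by omega, by omega⟩
          · rintro ⟨i, hi, rfl⟩; omega
      rw [h3, Nat.sum_Icc_choose, show r + j + 1 = r + (j+1) by omega]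
    · rintro ⟨a, b⟩ ha ⟨a', b'⟩ ha' hne
      simp only [Finset.disjoint_left, mem_image]
      rintro x ⟨y, hy, rfl⟩ ⟨y', hy', he⟩
      simp only [Finset.mem_coe, Finset.HasAntidiagonal.mem_antidiagonal] at ha ha'
      apply hne
      have h0 : a' = a := by
        have := congrFun he 0
        simpa using this
      subst h0
      have : b = b' := by omega
      simp [this]

variable {k q : ℕ} {π : ℕ → ℕ}

lemma adjInvF_subset : adjInvF k π ⊆ Finset.Icc 1 (k-2) := by
  intro i hi
  unfold adjInvF at hi
  simp only [Finset.mem_filter] at hi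
  exact hi.1

lemma eps_eq_zero (hk : 3 ≤ k) {i : ℕ} (hi : i = 1 ∨ i = k) : eps k π i = 0 := by
  unfold eps
  rw [if_neg]
  intro h
  have h2 := adjInvF_subset h
  simp only [Finset.mem_Icc] at h2
  omega

lemma sum_eps (hk : 3 ≤ k) : ∑ i ∈ Finset.Icc 1 k, eps k π i = (adjInvF k π).card := by
  have h1 : ∑ i ∈ Finset.Icc 1 k, eps k π i
      = ((Finset.Icc 1 k).filter (fun i => i - 1 ∈ adjInvF k π)).card := by
    rw [Finset.card_filter]
    exact Finset.sum_congr rfl fun i _ => by simp [eps]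
  have h2 : (Finset.Icc 1 k).filter (fun i => i - 1 ∈ adjInvF k π)
      = (adjInvF k π).image (· + 1) := by
    ext i
    simp only [Finset.mem_filter, Finset.mem_Icc, Finset.mem_image]
    constructor
    · rintro ⟨hik, hmem⟩
      refine ⟨i - 1, hmem, ?_⟩
      have h3 := adjInvF_subset hmem
      simp only [Finset.mem_Icc] at h3
      omega
    · rintro ⟨j, hj, rfl⟩
      have h3 := adjInvF_subset hj
      simp only [Finset.mem_Icc] at h3
      exact ⟨⟨by omega, by omega⟩, by simpa using hj⟩
  rw [h1, h2, Finset.card_image_of_injective _ (add_left_injective 1)]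

lemma xext_of_lt {x : ℕ → ℕ} {i : ℕ} (hik : i < k) : xext k q x i = x i :=
  if_neg (by omega)

lemma xext_top {x : ℕ → ℕ} : xext k q x k = q - 1 := if_pos rfl

lemma xext_step (hk : 3 ≤ k) {x : ℕ → ℕ} (hx : x ∈ W k q π) :
    ∀ i, 1 ≤ i → i ≤ k → xext k q x (i-1) + eps k π i ≤ xext k q x i := by
  obtain ⟨w1, w2, w3, w4⟩ := hx
  intro i h1 h2
  rcases eq_or_lt_of_le h2 with rfl | hik
  · rw [eps_eq_zero hk (Or.inr rfl), xext_top, xext_of_lt (show i - 1 < i by omega)]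
    have h3 := w2 (i-1) (by simp only [Finset.mem_Icc]; omega)
    omega
  · rw [xext_of_lt hik, xext_of_lt (by omega)]
    by_cases hi1 : i = 1
    · subst hi1
      rw [eps_eq_zero hk (Or.inl rfl)]
      have h0 : x 0 = 0 := w1 0 (by simp)
      simp [h0]
    · by_cases hS : i - 1 ∈ adjInvF k π
      · have h4 := w4 (i-1) hS
        have h5 : eps k π i = 1 := if_pos hS
        have h6 : i - 1 + 1 = i := by omega
        rw [h6] at h4
        omega
      · have h5 : eps k π i = 0 := if_neg hS
        have h4 := w3 (i-1) (by omega) (by omega)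
        have h6 : i - 1 + 1 = i := by omega
        rw [h6] at h4
        omega

lemma sum_dval_eps (hk : 3 ≤ k) {x : ℕ → ℕ} (hx : x ∈ W k q π) :
    ∀ m, m ≤ k → ∑ i ∈ Finset.Icc 1 m, (dval k q π x i + eps k π i) = xext k q x m := by
  intro m
  induction m with
  | zero =>
    intro _
    have h0 : x 0 = 0 := hx.1 0 (by simp)
    have h1 : xext k q x 0 = x 0 := xext_of_lt (by omega)
    simp [h1, h0]
  | succ m ih =>
    intro hm
    rw [Finset.sum_Icc_succ_top (by omega), ih (by omega)]
    have hstep := xext_step hk hx (m+1) (by omega) hm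
    simp only [Nat.add_sub_cancel] at hstep
    have hd : dval k q π x (m+1) = xext k q x (m+1) - xext k q x m - eps k π (m+1) := rfl
    omega

lemma sum_dval (hk : 3 ≤ k) (hq : 1 ≤ q) {x : ℕ → ℕ} (hx : x ∈ W k q π) :
    (∑ i ∈ Finset.Icc 1 k, dval k q π x i) + (adjInvF k π).card = q - 1 := by
  have h := sum_dval_eps hk hx k le_rfl
  rw [Finset.sum_add_distrib, sum_eps hk, xext_top] at h
  exact h

/-- The inverse map: build a vector from differences. -/
def PsiF (k : ℕ) (π : ℕ → ℕ) (dv : ℕ → ℕ) : ℕ → ℕ := fun i =>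
  if i ∈ Finset.Icc 1 (k-1) then ∑ j ∈ Finset.Icc 1 i, (dv j + eps k π j) else 0

lemma PsiF_mem (hk : 3 ≤ k) (hq : 1 ≤ q) {dv : ℕ → ℕ}
    (hsum : (∑ j ∈ Finset.Icc 1 k, dv j) + (adjInvF k π).card = q - 1) :
    PsiF k π dv ∈ W k q π ∧ ∀ i, 1 ≤ i → i ≤ k → dval k q π (PsiF k π dv) i = dv i := by
  set T : ℕ → ℕ := fun m => ∑ j ∈ Finset.Icc 1 m, (dv j + eps k π j) with hT
  have hTk : T k = q - 1 := by
    rw [hT]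
    simp only
    rw [Finset.sum_add_distrib, sum_eps hk]
    exact hsum
  have hmono : ∀ a b : ℕ, a ≤ b → T a ≤ T b := by
    intro a b hab
    exact Finset.sum_le_sum_of_subset (Finset.Icc_subset_Icc_right hab)
  have hTsucc : ∀ m, T (m+1) = T m + (dv (m+1) + eps k π (m+1)) := by
    intro m
    exact Finset.sum_Icc_succ_top (by omega) _
  have hxe : ∀ i, i ≤ k → xext k q (PsiF k π dv) i = T i := by
    intro i hik
    rcases eq_or_lt_of_le hik with rfl | hlt
    · rw [xext_top, hTk]
    · rw [xext_of_lt hlt]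
      by_cases hi : i ∈ Finset.Icc 1 (k-1)
      · exact if_pos hi
      · simp only [Finset.mem_Icc] at hi
        have hi0 : i = 0 := by omega
        subst hi0
        have : T 0 = 0 := by simp [hT]
        rw [this]
        exact if_neg (by simp)
  have hW : PsiF k π dv ∈ W k q π := by
    refine ⟨?_, ?_, ?_, ?_⟩
    · intro i hi
      exact if_neg hi
    · intro i hi
      simp only [Finset.mem_Icc] at hi
      have h1 : PsiF k π dv i = T i := if_pos (by simp only [Finset.mem_Icc]; omega)
      rw [h1]
      calc T i ≤ T k := hmono i k (by omega)
      _ = q - 1 := hTk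
    · intro i h1 h2
      have ha : PsiF k π dv i = T i := if_pos (by simp only [Finset.mem_Icc]; omega)
      have hb : PsiF k π dv (i+1) = T (i+1) := if_pos (by simp only [Finset.mem_Icc]; omega)
      rw [ha, hb]
      exact hmono i (i+1) (by omega)
    · intro i hi
      have hs := adjInvF_subset hi
      simp only [Finset.mem_Icc] at hs
      have ha : PsiF k π dv i = T i := if_pos (by simp only [Finset.mem_Icc]; omega)
      have hb : PsiF k π dv (i+1) = T (i+1) := if_pos (by simp only [Finset.mem_Icc]; omega)
      rw [ha, hb, hTsucc i]
      have he : eps k π (i+1) = 1 := if_pos (by simpa using hi)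
      omega
  refine ⟨hW, ?_⟩
  intro i h1 h2
  obtain ⟨m, rfl⟩ : ∃ m, i = m + 1 := ⟨i - 1, by omega⟩
  have hd : dval k q π (PsiF k π dv) (m+1)
      = xext k q (PsiF k π dv) (m+1) - xext k q (PsiF k π dv) m - eps k π (m+1) := rfl
  rw [hd, hxe (m+1) h2, hxe m (by omega), hTsucc m]
  omega

lemma PsiF_dval (hk : 3 ≤ k) {x : ℕ → ℕ} (hx : x ∈ W k q π) :
    PsiF k π (dval k q π x) = x := by
  funext i
  by_cases hi : i ∈ Finset.Icc 1 (k-1)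
  · have h1 : PsiF k π (dval k q π x) i = ∑ j ∈ Finset.Icc 1 i, (dval k q π x j + eps k π j) :=
      if_pos hi
    simp only [Finset.mem_Icc] at hi
    rw [h1, sum_dval_eps hk hx i (by omega), xext_of_lt (by omega)]
  · have h1 : PsiF k π (dval k q π x) i = 0 := if_neg hi
    rw [h1, hx.1 i hi]

lemma dcol_eq_zero_iff {C : Finset ℕ} (hC1 : C ⊆ Finset.Icc 1 k) (x : ℕ → ℕ) :
    dcol k q π C x = 0 ↔
      ¬∃ a ∈ C, ∀ b ∈ C, b ≠ a → dval k q π x b < dval k q π x a := by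
  unfold dcol
  split_ifs with h
  · have h1 := h.choose_spec.1
    have h2 := hC1 h1
    simp only [Finset.mem_Icc] at h2
    constructor
    · intro h0
      omega
    · intro hcon
      exact absurd h hcon
  · exact iff_of_true rfl h

lemma noUniqueMax_iff {t : ℕ} (ht : 1 ≤ t) (u : Fin t → ℕ) :
    (¬∃ i : Fin t, ∀ j : Fin t, j ≠ i → u j < u i) ↔
      ∃ i j : Fin t, i ≠ j ∧ (∀ l, u l ≤ u i) ∧ u j = u i := by
  constructor
  · intro h
    obtain ⟨i, -, hi⟩ := Finset.exists_max_image Finset.univ u ⟨⟨0, by omega⟩, Finset.mem_univ _⟩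
    push_neg at h
    obtain ⟨j, hji, hij⟩ := h i
    exact ⟨i, j, Ne.symm hji, fun l => hi l (Finset.mem_univ l),
      le_antisymm (hi j (Finset.mem_univ j)) hij⟩
  · rintro ⟨i, j, hij, hmax, heq⟩ ⟨a, ha⟩
    by_cases hai : a = i
    · subst hai
      have := ha j (fun e => hij (e.symm))
      omega
    · have h1 := ha i (fun e => hai (e.symm)) -- careful direction
      have h2 := hmax a
      omega

theorem stmt17 (k q : ℕ) (hk : 3 ≤ k) (hq : 1 ≤ q) (π : ℕ → ℕ) (hπ : OneLine k π)
    (C : Finset ℕ) (hC2 : 2 ≤ C.card) (hC : GoodSet k π C) :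
    {x | x ∈ W k q π ∧ dcol k q π C x = 0}.ncard
      = ∑ d ∈ Finset.range (q - (adjInvF k π).card),
          Xcount C.card d *
            Nat.choose (k + q - (adjInvF k π).card - C.card - 2 - d) (k - C.card - 1) := by
  obtain ⟨hC1, hCind, -, -, -⟩ := hC
  -- C.card < k
  have htk : C.card < k := by
    by_contra hle
    push_neg at hle
    have hcard : (Finset.Icc 1 k).card ≤ C.card := by
      rw [Nat.card_Icc]; omega
    have hCall : C = Finset.Icc 1 k := Finset.eq_of_subset_of_card_le hC1 hcard
    have h1C : 1 ∈ C := by rw [hCall]; simp only [Finset.mem_Icc]; omega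
    have h2C : 2 ∈ C := by rw [hCall]; simp only [Finset.mem_Icc]; omega
    obtain ⟨a, ha, hπa⟩ : ∃ a ∈ Set.Icc 1 (k-1), π a = 1 := by
      have := hπ.1.surjOn (Set.mem_Icc.mpr ⟨le_refl 1, by omega⟩)
      obtain ⟨a, ha, hπa⟩ := this
      exact ⟨a, ha, hπa⟩
    simp only [Set.mem_Icc] at ha
    refine hCind 1 h1C 2 h2C (by norm_num) (Or.inl ⟨by norm_num, a, ha.1, ?_, ?_⟩)
    · omega
    · have h5 : Finset.Icc a (a + (2-1) - 1) = {a} := by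
        norm_num
      rw [h5]
      simp [hπa]
  by_cases hqs : q ≤ (adjInvF k π).card
  · have hempty : {x | x ∈ W k q π ∧ dcol k q π C x = 0} = ∅ := by
      ext x
      simp only [Set.mem_setOf_eq, Set.mem_empty_iff_false, iff_false, not_and]
      intro hxW _
      have h := sum_dval hk hq hxW
      omega
    rw [hempty, show q - (adjInvF k π).card = 0 by omega]
    simp
  · push_neg at hqs
    set s := (adjInvF k π).card with hs
    set t := C.card with ht
    set n := q - 1 - s with hn
    set Cc := Finset.Icc 1 k \ C with hCcdef
    have hWcc : Cc.card = k - t := by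
      rw [hCcdef, Finset.card_sdiff_of_subset hC1, Nat.card_Icc]
      omega
    let eC : {a // a ∈ C} ≃ Fin t := C.equivFin
    let eD : {a // a ∈ Cc} ≃ Fin (k - t) := Cc.equivFin.trans (finCongr hWcc)
    let cf : Fin t → ℕ := fun i => (eC.symm i : ℕ)
    let vf : Fin (k-t) → ℕ := fun j => (eD.symm j : ℕ)
    have hcf_mem : ∀ i, cf i ∈ C := fun i => (eC.symm i).2
    have hvf_mem : ∀ j, vf j ∈ Cc := fun j => (eD.symm j).2
    have hcf_inj : Function.Injective cf := fun i j h => eC.symm.injective (Subtype.ext h)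
    have hvf_inj : Function.Injective vf := fun i j h => eD.symm.injective (Subtype.ext h)
    have hcf_surj : ∀ a ∈ C, ∃ i, cf i = a := fun a ha =>
      ⟨eC ⟨a, ha⟩, by simp only [cf, Equiv.symm_apply_apply]⟩
    have hvf_surj : ∀ a ∈ Cc, ∃ j, vf j = a := fun a ha =>
      ⟨eD ⟨a, ha⟩, by simp only [vf, Equiv.symm_apply_apply]⟩
    let dvf : (Fin t → ℕ) → (Fin (k-t) → ℕ) → ℕ → ℕ := fun u v i =>
      if h : i ∈ C then u (eC ⟨i, h⟩) else if h : i ∈ Cc then v (eD ⟨i, h⟩) else 0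
    have hdv_cf : ∀ u v i, dvf u v (cf i) = u i := by
      intro u v i
      have h : cf i ∈ C := hcf_mem i
      simp only [dvf, dif_pos h]
      rw [show (⟨cf i, h⟩ : {a // a ∈ C}) = eC.symm i from Subtype.ext rfl,
        Equiv.apply_symm_apply]
    have hdv_vf : ∀ u v j, dvf u v (vf j) = v j := by
      intro u v j
      have h : vf j ∈ Cc := hvf_mem j
      have hnc : vf j ∉ C := by
        have h2 := h
        rw [hCcdef, Finset.mem_sdiff] at h2
        exact h2.2
      simp only [dvf, dif_neg hnc, dif_pos h]
      rw [show (⟨vf j, h⟩ : {a // a ∈ Cc}) = eD.symm j from Subtype.ext rfl,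
        Equiv.apply_symm_apply]
    have hsum_dv : ∀ u v, ∑ i ∈ Finset.Icc 1 k, dvf u v i = (∑ i, u i) + (∑ j, v j) := by
      intro u v
      have hsplit : Finset.Icc 1 k = C ∪ Cc := by
        rw [hCcdef, Finset.union_sdiff_of_subset hC1]
      rw [hsplit, Finset.sum_union Finset.disjoint_sdiff]
      congr 1
      · calc ∑ a ∈ C, dvf u v a = ∑ a : {x // x ∈ C}, dvf u v (a : ℕ) :=
              (Finset.sum_coe_sort _ _).symm
          _ = ∑ i : Fin t, dvf u v ((eC.symm i : {x // x ∈ C}) : ℕ) :=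
              (Equiv.sum_comp eC.symm (fun a : {x // x ∈ C} => dvf u v (a : ℕ))).symm
          _ = ∑ i, u i := Fintype.sum_congr _ _ fun i => hdv_cf u v i
      · calc ∑ a ∈ Cc, dvf u v a = ∑ a : {x // x ∈ Cc}, dvf u v (a : ℕ) :=
              (Finset.sum_coe_sort _ _).symm
          _ = ∑ j : Fin (k-t), dvf u v ((eD.symm j : {x // x ∈ Cc}) : ℕ) :=
              (Equiv.sum_comp eD.symm (fun a : {x // x ∈ Cc} => dvf u v (a : ℕ))).symm
          _ = ∑ j, v j := Fintype.sum_congr _ _ fun j => hdv_vf u v j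
    let Φ : (Fin t → ℕ) × (Fin (k-t) → ℕ) → (ℕ → ℕ) := fun p => PsiF k π (dvf p.1 p.2)
    let Q : (Fin t → ℕ) → Prop := fun d => ∃ i j : Fin t, i ≠ j ∧ (∀ l, d l ≤ d i) ∧ d j = d i
    let Bp : Finset ((Fin t → ℕ) × (Fin (k-t) → ℕ)) :=
      (Finset.range (n+1)).biUnion fun m =>
        ((Finset.Nat.antidiagonalTuple t m).filter Q) ×ˢ Finset.Nat.antidiagonalTuple (k-t) (n-m)
    have hBp_mem : ∀ p : (Fin t → ℕ) × (Fin (k-t) → ℕ),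
        p ∈ Bp ↔ (∑ i, p.1 i) + (∑ j, p.2 j) = n ∧ Q p.1 := by
      intro p
      simp only [Bp, Finset.mem_biUnion, Finset.mem_range, Finset.mem_product, Finset.mem_filter,
        Finset.Nat.mem_antidiagonalTuple]
      constructor
      · rintro ⟨m, hm, ⟨hu, hQ⟩, hv⟩
        exact ⟨by omega, hQ⟩
      · rintro ⟨hsum, hQ⟩
        exact ⟨∑ i, p.1 i, by omega, ⟨rfl, hQ⟩, by omega⟩
    have htrans : ∀ x : ℕ → ℕ,
        ((∃ a ∈ C, ∀ b ∈ C, b ≠ a → dval k q π x b < dval k q π x a) ↔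
          ∃ i : Fin t, ∀ j : Fin t, j ≠ i → dval k q π x (cf j) < dval k q π x (cf i)) := by
      intro x
      constructor
      · rintro ⟨a, ha, hmax⟩
        obtain ⟨i, rfl⟩ := hcf_surj a ha
        exact ⟨i, fun j hj => hmax _ (hcf_mem j) (fun e => hj (hcf_inj e))⟩
      · rintro ⟨i, hi⟩
        refine ⟨cf i, hcf_mem i, ?_⟩
        intro b hb hne
        obtain ⟨j, rfl⟩ := hcf_surj b hb
        exact hi j (fun e => hne (by rw [e]))
    have hcf_range : ∀ i, 1 ≤ cf i ∧ cf i ≤ k := by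
      intro i
      have h := hC1 (hcf_mem i)
      simpa only [Finset.mem_Icc] using h
    have hvf_range : ∀ j, 1 ≤ vf j ∧ vf j ≤ k := by
      intro j
      have h := hvf_mem j
      rw [hCcdef, Finset.mem_sdiff] at h
      simpa only [Finset.mem_Icc] using h.1
    have hagree : ∀ (x : ℕ → ℕ), ∀ i ∈ Finset.Icc 1 k,
        dvf (fun i => dval k q π x (cf i)) (fun j => dval k q π x (vf j)) i = dval k q π x i := by
      intro x i hi
      by_cases hic : i ∈ C
      · simp only [dvf, dif_pos hic]
        congr 1
        show (eC.symm (eC ⟨i, hic⟩) : ℕ) = i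
        rw [Equiv.symm_apply_apply]
      · have hicc : i ∈ Cc := by
          rw [hCcdef, Finset.mem_sdiff]
          exact ⟨hi, hic⟩
        simp only [dvf, dif_neg hic, dif_pos hicc]
        congr 1
        show (eD.symm (eD ⟨i, hicc⟩) : ℕ) = i
        rw [Equiv.symm_apply_apply]
    have hset : {x | x ∈ W k q π ∧ dcol k q π C x = 0} = Φ '' (Bp : Set _) := by
      ext x
      simp only [Set.mem_setOf_eq, Set.mem_image, Finset.mem_coe]
      constructor
      · rintro ⟨hxW, hx0⟩
        refine ⟨(fun i => dval k q π x (cf i), fun j => dval k q π x (vf j)), ?_, ?_⟩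
        · rw [hBp_mem]
          constructor
          · have h1 := sum_dval hk hq hxW
            have h2 : ∑ i ∈ Finset.Icc 1 k,
                dvf (fun i => dval k q π x (cf i)) (fun j => dval k q π x (vf j)) i
                = ∑ i ∈ Finset.Icc 1 k, dval k q π x i :=
              Finset.sum_congr rfl (hagree x)
            have h3 := hsum_dv (fun i => dval k q π x (cf i)) (fun j => dval k q π x (vf j))
            show (∑ i : Fin t, dval k q π x (cf i)) + (∑ j : Fin (k-t), dval k q π x (vf j)) = n
            omega
          · rw [dcol_eq_zero_iff hC1, htrans] at hx0
            exact (noUniqueMax_iff (by omega) (fun i => dval k q π x (cf i))).mp hx0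
        · show PsiF k π (dvf _ _) = x
          have heq : PsiF k π (dvf (fun i => dval k q π x (cf i)) (fun j => dval k q π x (vf j)))
              = PsiF k π (dval k q π x) := by
            funext i
            unfold PsiF
            by_cases hi : i ∈ Finset.Icc 1 (k-1)
            · rw [if_pos hi, if_pos hi]
              refine Finset.sum_congr rfl fun j hj => ?_
              simp only [Finset.mem_Icc] at hi hj
              rw [hagree x j (by simp only [Finset.mem_Icc]; omega)]
            · rw [if_neg hi, if_neg hi]
          rw [heq, PsiF_dval hk hxW]
      · rintro ⟨p, hp, rfl⟩
        rw [hBp_mem] at hp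
        obtain ⟨hpsum, hpQ⟩ := hp
        have hsum' : (∑ j ∈ Finset.Icc 1 k, dvf p.1 p.2 j) + (adjInvF k π).card = q - 1 := by
          rw [hsum_dv]
          omega
        obtain ⟨hW, hdv⟩ := PsiF_mem hk hq hsum'
        refine ⟨hW, ?_⟩
        rw [dcol_eq_zero_iff hC1, htrans]
        have hval : ∀ i, dval k q π (PsiF k π (dvf p.1 p.2)) (cf i) = p.1 i := by
          intro i
          rw [hdv _ (hcf_range i).1 (hcf_range i).2, hdv_cf]
        rintro ⟨i, hi⟩
        refine (noUniqueMax_iff (by omega : (1:ℕ) ≤ t) p.1).mpr hpQ ⟨i, fun j hj => ?_⟩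
        have h := hi j hj
        rwa [hval, hval] at h
    have hinj : Set.InjOn Φ (Bp : Set _) := by
      intro p hp p' hp' he
      rw [Finset.mem_coe, hBp_mem] at hp hp'
      have h1 : (∑ j ∈ Finset.Icc 1 k, dvf p.1 p.2 j) + (adjInvF k π).card = q - 1 := by
        rw [hsum_dv]; omega
      have h1' : (∑ j ∈ Finset.Icc 1 k, dvf p'.1 p'.2 j) + (adjInvF k π).card = q - 1 := by
        rw [hsum_dv]; omega
      obtain ⟨-, hdv⟩ := PsiF_mem hk hq h1
      obtain ⟨-, hdv'⟩ := PsiF_mem hk hq h1'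
      have hu : p.1 = p'.1 := by
        funext i
        have e1 : dval k q π (Φ p) (cf i) = p.1 i := by
          rw [show Φ p = PsiF k π (dvf p.1 p.2) from rfl,
            hdv _ (hcf_range i).1 (hcf_range i).2, hdv_cf]
        have e2 : dval k q π (Φ p') (cf i) = p'.1 i := by
          rw [show Φ p' = PsiF k π (dvf p'.1 p'.2) from rfl,
            hdv' _ (hcf_range i).1 (hcf_range i).2, hdv_cf]
        rw [← e1, ← e2, he]
      have hv : p.2 = p'.2 := by
        funext j
        have e1 : dval k q π (Φ p) (vf j) = p.2 j := by
          rw [show Φ p = PsiF k π (dvf p.1 p.2) from rfl,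
            hdv _ (hvf_range j).1 (hvf_range j).2, hdv_vf]
        have e2 : dval k q π (Φ p') (vf j) = p'.2 j := by
          rw [show Φ p' = PsiF k π (dvf p'.1 p'.2) from rfl,
            hdv' _ (hvf_range j).1 (hvf_range j).2, hdv_vf]
        rw [← e1, ← e2, he]
      exact Prod.ext hu hv
    rw [hset, Set.ncard_image_of_injOn hinj, Set.ncard_coe_finset]
    have hdisj : ∀ m₁ ∈ Finset.range (n+1), ∀ m₂ ∈ Finset.range (n+1), m₁ ≠ m₂ →
        Disjoint (((Finset.Nat.antidiagonalTuple t m₁).filter Q)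
            ×ˢ Finset.Nat.antidiagonalTuple (k-t) (n-m₁))
          (((Finset.Nat.antidiagonalTuple t m₂).filter Q)
            ×ˢ Finset.Nat.antidiagonalTuple (k-t) (n-m₂)) := by
      intro m₁ _ m₂ _ hne
      rw [Finset.disjoint_left]
      rintro p hp1 hp2
      simp only [Finset.mem_product, Finset.mem_filter,
        Finset.Nat.mem_antidiagonalTuple] at hp1 hp2
      exact hne (hp1.1.1.symm.trans hp2.1.1)
    rw [show Bp.card = ∑ m ∈ Finset.range (n+1),
        (((Finset.Nat.antidiagonalTuple t m).filter Q)
          ×ˢ Finset.Nat.antidiagonalTuple (k-t) (n-m)).card from Finset.card_biUnion hdisj]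
    rw [show q - s = n + 1 by omega]
    refine Finset.sum_congr rfl fun m hm => ?_
    simp only [Finset.mem_range] at hm
    rw [Finset.card_product]
    have hXc : ((Finset.Nat.antidiagonalTuple t m).filter Q).card = Xcount t m := rfl
    have hch : (Finset.Nat.antidiagonalTuple (k-t) (n-m)).card
        = (k + q - s - t - 2 - m).choose (k - t - 1) := by
      obtain ⟨w, hw⟩ : ∃ w, k - t = w + 1 := ⟨k - t - 1, by omega⟩
      rw [hw, card_adt]
      congr 1
      omega
    rw [hXc, hch]

end
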